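/- For every p ∈ X and all y, y' ∈ ℝ^d, the Fenchel coupling satisfies F(p, y') ≤ F(p, y) + ⟨y' − y, Q(y) − p⟩ + (1/(2K)) ‖y' − y‖². -/

import Mathlib

open scoped RealInnerProductSpace

lemma key_strong {d : ℕ}
    (X : Set (EuclideanSpace ℝ (Fin d))) (hXconv : Convex ℝ X)
    (h : EuclideanSpace ℝ (Fin d) → ℝ) (K : ℝ) (hK : 0 < K)
    (hsc : ∀ x ∈ X, ∀ x' ∈ X, ∀ l ∈ Set.Icc (0 : ℝ) 1,
      h (l • x + (1 - l) • x') ≤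
        l * h x + (1 - l) * h x' - K / 2 * l * (1 - l) * ‖x - x'‖ ^ 2)
    (Q : EuclideanSpace ℝ (Fin d) → EuclideanSpace ℝ (Fin d))
    (hQmem : ∀ y, Q y ∈ X)
    (hQmax : ∀ y, ∀ x ∈ X, ⟪y, x⟫ - h x ≤ ⟪y, Q y⟫ - h (Q y))
    (y : EuclideanSpace ℝ (Fin d)) (x' : EuclideanSpace ℝ (Fin d)) (hx' : x' ∈ X) :
    K / 2 * ‖x' - Q y‖ ^ 2 ≤ h x' - h (Q y) - ⟪y, x' - Q y⟫ := by
  set x := Q y with hx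
  have hxm : x ∈ X := hQmem y
  have step : ∀ l ∈ Set.Ioc (0 : ℝ) 1,
      K / 2 * (1 - l) * ‖x' - x‖ ^ 2 ≤ h x' - h x - ⟪y, x' - x⟫ := by
    intro l hl
    have hl0 : 0 < l := hl.1
    have hl1 : l ≤ 1 := hl.2
    have hz : l • x' + (1 - l) • x ∈ X :=
      hXconv hx' hxm hl0.le (by linarith) (by ring)
    have h1 := hsc x' hx' x hxm l ⟨hl0.le, hl1⟩
    have h2 := hQmax y _ hz
    have hinner : ⟪y, l • x' + (1 - l) • x⟫ = l * ⟪y, x'⟫ + (1 - l) * ⟪y, x⟫ := by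
      rw [inner_add_right, real_inner_smul_right, real_inner_smul_right]
    have hinner2 : ⟪y, x' - x⟫ = ⟪y, x'⟫ - ⟪y, x⟫ := by rw [inner_sub_right]
    -- l * (h x' - h x - ⟪y, x' - x⟫) ≥ K/2 * l * (1-l) * ‖x'-x‖^2
    have hmul : K / 2 * l * (1 - l) * ‖x' - x‖ ^ 2 ≤ l * (h x' - h x - ⟪y, x' - x⟫) := by
      nlinarith [h1, h2, hinner, hinner2]
    have := (mul_le_mul_iff_right₀ hl0).mp (by linarith [hmul] : l * (K / 2 * (1 - l) * ‖x' - x‖ ^ 2) ≤ l * (h x' - h x - ⟪y, x' - x⟫))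
    linarith
  set C := K / 2 * ‖x' - x‖ ^ 2 with hC
  have hC0 : 0 ≤ C := by positivity
  set L := h x' - h x - ⟪y, x' - x⟫ with hL
  refine le_of_forall_pos_le_add ?_
  intro ε hε
  rcases le_or_gt C ε with hce | hce
  · have := step 1 ⟨one_pos, le_refl 1⟩
    have : 0 ≤ L := by rw [hL]; nlinarith [this]
    linarith
  · have hCpos : 0 < C := lt_trans hε hce
    have hl : ε / C ∈ Set.Ioc (0 : ℝ) 1 := ⟨by positivity, by rw [div_le_one hCpos]; linarith⟩
    have := step (ε / C) hl
    have hcalc : C * (1 - ε / C) = C - ε := by field_simp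
    have : K / 2 * (1 - ε / C) * ‖x' - x‖ ^ 2 = C - ε := by
      rw [← hcalc, hC]; ring
    nlinarith [step (ε / C) hl]

theorem fenchel_coupling_step_bound {d : ℕ}
    (X : Set (EuclideanSpace ℝ (Fin d))) (hXc : IsCompact X)
    (hXconv : Convex ℝ X) (hXne : X.Nonempty)
    (h : EuclideanSpace ℝ (Fin d) → ℝ) (K : ℝ) (hK : 0 < K)
    (hcont : ContinuousOn h X)
    (hsc : ∀ x ∈ X, ∀ x' ∈ X, ∀ l ∈ Set.Icc (0 : ℝ) 1,
      h (l • x + (1 - l) • x') ≤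
        l * h x + (1 - l) * h x' - K / 2 * l * (1 - l) * ‖x - x'‖ ^ 2)
    (Q : EuclideanSpace ℝ (Fin d) → EuclideanSpace ℝ (Fin d))
    (hQmem : ∀ y, Q y ∈ X)
    (hQmax : ∀ y, ∀ x ∈ X, ⟪y, x⟫ - h x ≤ ⟪y, Q y⟫ - h (Q y))
    (hstar : EuclideanSpace ℝ (Fin d) → ℝ)
    (hhstar : ∀ y, hstar y = ⟪y, Q y⟫ - h (Q y))
    (F : EuclideanSpace ℝ (Fin d) → EuclideanSpace ℝ (Fin d) → ℝ)
    (hF : ∀ p y, F p y = h p + hstar y - ⟪y, p⟫)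
    (p : EuclideanSpace ℝ (Fin d)) (hp : p ∈ X)
    (y y' : EuclideanSpace ℝ (Fin d)) :
    F p y' ≤ F p y + ⟪y' - y, Q y - p⟫ + 1 / (2 * K) * ‖y' - y‖ ^ 2 := by
  have hkey := key_strong X hXconv h K hK hsc Q hQmem hQmax y (Q y') (hQmem y')
  rw [hF, hF, hhstar, hhstar]
  set x := Q y
  set x' := Q y'
  have e1 : ⟪y', p⟫ = ⟪y, p⟫ + ⟪y' - y, p⟫ := by rw [inner_sub_left]; ring
  have e2 : ⟪y' - y, x - p⟫ = ⟪y' - y, x⟫ - ⟪y' - y, p⟫ := by rw [inner_sub_right]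
  have e3 : ⟪y', x'⟫ = ⟪y, x'⟫ + ⟪y' - y, x'⟫ := by rw [inner_sub_left]; ring
  have e4 : ⟪y, x' - x⟫ = ⟪y, x'⟫ - ⟪y, x⟫ := by rw [inner_sub_right]
  have e5 : ⟪y' - y, x' - x⟫ = ⟪y' - y, x'⟫ - ⟪y' - y, x⟫ := by rw [inner_sub_right]
  have hcs : ⟪y' - y, x' - x⟫ ≤ ‖y' - y‖ * ‖x' - x‖ := real_inner_le_norm _ _
  have hsq : ‖y' - y‖ * ‖x' - x‖ - K / 2 * ‖x' - x‖ ^ 2 ≤ 1 / (2 * K) * ‖y' - y‖ ^ 2 := by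
    have : 0 ≤ (‖y' - y‖ - K * ‖x' - x‖) ^ 2 := sq_nonneg _
    have hK' : 0 < 2 * K := by linarith
    have heq : 2 * K * (1 / (2 * K) * ‖y' - y‖ ^ 2) = ‖y' - y‖ ^ 2 := by field_simp
    nlinarith [this, hK']
  nlinarith [hkey]
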